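/- Suppose φ ∈ L²(G) with Fourier transform φ̂, m₀ : G* → ℂ measurable with |m₀| ≤ 1 a.e., φ̂(Bω) = m₀(ω)φ̂(ω) a.e., and lim_{n→∞} |φ̂(B^{-n}ω)| = 1 for a.e. ω. Then |φ̂(ω)| = ∏_{j=1}^{∞} |m₀(B^{-j}ω)| for a.e. ω, i.e., |φ̂| coincides with the canonical infinite-product solution φ̂_{|m₀|}. -/

import Mathlib

open MeasureTheory Filter

/-- If `φ̂ ∈ L²`, `|m₀| ≤ 1` a.e., `φ̂(Bω) = m₀(ω)φ̂(ω)` a.e., and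
`|φ̂(B^{-n}ω)| → 1` a.e., then `|φ̂(ω)| = ∏_{j=1}^∞ |m₀(B^{-j}ω)|` a.e., i.e. `|φ̂|`
coincides with the canonical infinite-product solution `φ̂_{|m₀|}`. -/
theorem modulus_eq_infinite_product
    {G : Type*} [MeasurableSpace G] (μ : Measure G)
    (B : G ≃ G) (hBmeas : Measurable B) (hBinvmeas : Measurable B.symm)
    (hB : Measure.QuasiMeasurePreserving (⇑B) μ μ)
    (hBinv : Measure.QuasiMeasurePreserving (⇑B.symm) μ μ)
    (φhat : G → ℂ) (hφL2 : MemLp φhat 2 μ)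
    (m₀ : G → ℂ) (hm₀meas : Measurable m₀)
    (hm₀bd : ∀ᵐ ω ∂μ, ‖m₀ ω‖ ≤ 1)
    (hrefine : ∀ᵐ ω ∂μ, φhat (B ω) = m₀ ω * φhat ω)
    (hlim : ∀ᵐ ω ∂μ, Tendsto (fun n : ℕ => ‖φhat ((⇑B.symm)^[n] ω)‖) atTop (nhds 1)) :
    ∀ᵐ ω ∂μ, Tendsto (fun n : ℕ => ∏ j ∈ Finset.Icc 1 n, ‖m₀ ((⇑B.symm)^[j] ω)‖)
      atTop (nhds ‖φhat ω‖) := by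
  have hall : ∀ᵐ ω ∂μ, ∀ j : ℕ,
      φhat (B ((⇑B.symm)^[j] ω)) = m₀ ((⇑B.symm)^[j] ω) * φhat ((⇑B.symm)^[j] ω) := by
    rw [ae_all_iff]
    intro j
    exact (hBinv.iterate j).ae hrefine
  filter_upwards [hall, hlim] with ω hω hlimω
  have key : ∀ n : ℕ,
      (∏ j ∈ Finset.Icc 1 n, ‖m₀ ((⇑B.symm)^[j] ω)‖) * ‖φhat ((⇑B.symm)^[n] ω)‖
        = ‖φhat ω‖ := by
    intro n
    induction n with
    | zero => simp
    | succ n ih =>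
      have hB1 : B ((⇑B.symm)^[n + 1] ω) = (⇑B.symm)^[n] ω := by
        rw [Function.iterate_succ_apply']
        exact B.apply_symm_apply _
      have h1 : φhat ((⇑B.symm)^[n] ω)
          = m₀ ((⇑B.symm)^[n + 1] ω) * φhat ((⇑B.symm)^[n + 1] ω) := by
        rw [← hB1]; exact hω (n + 1)
      rw [Finset.prod_Icc_succ_top (by omega)]
      rw [← ih, h1, norm_mul]
      ring
  have hne : ∀ᶠ n in atTop, ‖φhat ((⇑B.symm)^[n] ω)‖ ≠ 0 :=
    hlimω.eventually_ne one_ne_zero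
  have heq : ∀ᶠ n in atTop,
      (∏ j ∈ Finset.Icc 1 n, ‖m₀ ((⇑B.symm)^[j] ω)‖)
        = ‖φhat ω‖ / ‖φhat ((⇑B.symm)^[n] ω)‖ := by
    filter_upwards [hne] with n hn
    rw [eq_div_iff hn]
    exact key n
  have hdiv : Tendsto (fun n : ℕ => ‖φhat ω‖ / ‖φhat ((⇑B.symm)^[n] ω)‖)
      atTop (nhds ‖φhat ω‖) := by
    have := (tendsto_const_nhds (x := ‖φhat ω‖)).div hlimω (one_ne_zero)
    simpa [Pi.div_def] using this
  exact hdiv.congr' (EventuallyEq.symm heq)
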